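/- Let 0 < λ < 1 and 0 < q ≤ 1. For every positive integer t, Σ_{m=0}^∞ (−λ)^m·ĥ_{qm}(t+1) + λ·Σ_{m=0}^∞ (−λ)^m·ĥ_{qm+q−1}(t+1) = F_{q,−λ}(t), where both series converge. (This shows that the probability P(N^q(t) = 0) of no events by time t coincides with the survival probability P(T > t) = F_{q,−λ}(t) of the first waiting time.) -/

import Mathlib

/-- Generalized binomial coefficient `ĥ_α(x) = Γ(x+α)/(Γ(α+1)·Γ(x))`. -/
noncomputable def hhat (α x : ℝ) : ℝ :=
  Real.Gamma (x + α) / (Real.Gamma (α + 1) * Real.Gamma x)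

/-- Discrete Mittag-Leffler function `F_{q,λ}(t) = Σ_m ĥ_{qm}(t)·λ^m`, with `F_{q,λ}(0) = 1`. -/
noncomputable def dML (q lam : ℝ) (t : ℕ) : ℝ :=
  if t = 0 then 1 else ∑' m : ℕ, hhat (q * m) (t : ℝ) * lam ^ m

lemma gamma_add_nat (α : ℝ) (hα : 0 < α) (n : ℕ) :
    Real.Gamma (α + n) = Real.Gamma α * ∏ k ∈ Finset.range n, (α + k) := by
  induction n with
  | zero => simp
  | succ n ih =>
    have h1 : α + (n + 1 : ℕ) = (α + n) + 1 := by push_cast; ring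
    have h2 : α + (n : ℝ) ≠ 0 := by positivity
    rw [h1, Real.Gamma_add_one h2, ih, Finset.prod_range_succ]
    ring

lemma hhat_prod (α : ℝ) (hα : -1 < α) (n : ℕ) :
    hhat α ((n : ℝ) + 1) = (∏ k ∈ Finset.range n, (α + 1 + k)) / n.factorial := by
  have h1 : (0:ℝ) < α + 1 := by linarith
  have h2 : ((n : ℝ) + 1) + α = (α + 1) + n := by ring
  have h3 : Real.Gamma ((n:ℝ) + 1) = n.factorial := by
    exact_mod_cast Real.Gamma_nat_eq_factorial n
  have g : Real.Gamma (α + 1) ≠ 0 := (Real.Gamma_pos_of_pos h1).ne'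
  rw [hhat, h2, gamma_add_nat _ h1, h3]
  field_simp

lemma hhat_rec (α : ℝ) (hα : 0 < α) (t : ℕ) (ht : 1 ≤ t) :
    hhat α ((t : ℝ) + 1) - hhat (α - 1) ((t : ℝ) + 1) = hhat α (t : ℝ) := by
  have htR : (0:ℝ) < t := by exact_mod_cast ht
  have h1 : ((t:ℝ) + 1) + α = ((t:ℝ) + α) + 1 := by ring
  have h2 : (t:ℝ) + α ≠ 0 := by positivity
  have h3 : Real.Gamma (((t:ℝ)+1) + α) = ((t:ℝ) + α) * Real.Gamma ((t:ℝ) + α) := by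
    rw [h1, Real.Gamma_add_one h2]
  have h4 : Real.Gamma (α + 1) = α * Real.Gamma α := Real.Gamma_add_one hα.ne'
  have h5 : Real.Gamma ((t:ℝ) + 1) = (t:ℝ) * Real.Gamma (t:ℝ) := Real.Gamma_add_one htR.ne'
  have h6 : ((t:ℝ)+1) + (α - 1) = (t:ℝ) + α := by ring
  have h7 : (α - 1) + 1 = α := by ring
  have g1 : Real.Gamma α ≠ 0 := (Real.Gamma_pos_of_pos hα).ne'
  have g2 : Real.Gamma (t:ℝ) ≠ 0 := (Real.Gamma_pos_of_pos htR).ne'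
  rw [hhat, hhat, hhat, h3, h4, h5, h6, h7]
  field_simp
  ring

lemma hhat_nonneg_le (α : ℝ) (hα : -1 < α) (n : ℕ) (m : ℕ) (hm : α ≤ m) :
    0 ≤ hhat α ((n : ℝ) + 1) ∧ hhat α ((n : ℝ) + 1) ≤ ((m : ℝ) + n) ^ n := by
  rw [hhat_prod α hα n]
  have hfac : (1:ℝ) ≤ n.factorial := by exact_mod_cast Nat.one_le_iff_ne_zero.mpr n.factorial_ne_zero
  have hpos : ∀ k ∈ Finset.range n, (0:ℝ) ≤ α + 1 + k := by
    intro k _; have : (0:ℝ) ≤ k := Nat.cast_nonneg k; linarith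
  have hprod0 : (0:ℝ) ≤ ∏ k ∈ Finset.range n, (α + 1 + k) := Finset.prod_nonneg hpos
  have hprodle : (∏ k ∈ Finset.range n, (α + 1 + k)) ≤ ((m : ℝ) + n) ^ n := by
    calc (∏ k ∈ Finset.range n, (α + 1 + k)) ≤ ∏ k ∈ Finset.range n, ((m : ℝ) + n) := by
          apply Finset.prod_le_prod hpos
          intro k hk
          have : (k:ℝ) ≤ (n:ℝ) - 1 := by
            have := Finset.mem_range.mp hk
            have : (k:ℝ) + 1 ≤ n := by exact_mod_cast this
            linarith
          linarith
      _ = ((m : ℝ) + n) ^ n := by rw [Finset.prod_const, Finset.card_range]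
  constructor
  · positivity
  · calc (∏ k ∈ Finset.range n, (α + 1 + k)) / n.factorial
        ≤ (∏ k ∈ Finset.range n, (α + 1 + k)) / 1 := by
          apply div_le_div_of_nonneg_left hprod0 zero_lt_one hfac
      _ = _ := by rw [div_one]
      _ ≤ ((m : ℝ) + n) ^ n := hprodle

lemma summable_aux (lam : ℝ) (hlam0 : 0 < lam) (hlam1 : lam < 1) (t : ℕ)
    (β : ℕ → ℝ) (hβ1 : ∀ m, -1 < β m) (hβ2 : ∀ m, β m ≤ m) :
    Summable (fun m : ℕ => (-lam) ^ m * hhat (β m) ((t : ℝ) + 1)) := by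
  have base : Summable (fun m : ℕ => (m : ℝ) ^ t * lam ^ m) :=
    summable_pow_mul_geometric_of_norm_lt_one t
      (by rwa [Real.norm_eq_abs, abs_of_pos hlam0])
  have sh : Summable (fun m : ℕ => ((m + t : ℕ) : ℝ) ^ t * lam ^ (m + t)) :=
    (summable_nat_add_iff t).mpr base
  have hS : Summable (fun m : ℕ => ((m : ℝ) + t) ^ t * lam ^ m) := by
    have := sh.mul_right ((lam ^ t)⁻¹)
    refine this.congr fun m => ?_
    push_cast
    rw [pow_add]
    field_simp
  apply Summable.of_abs
  apply Summable.of_nonneg_of_le (fun m => abs_nonneg _) _ hS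
  intro m
  obtain ⟨h0, h1⟩ := hhat_nonneg_le (β m) (hβ1 m) t m (hβ2 m)
  rw [abs_mul, abs_pow, abs_neg, abs_of_pos hlam0, abs_of_nonneg h0, mul_comm]
  exact mul_le_mul_of_nonneg_right h1 (pow_nonneg hlam0.le m)

lemma hhat_zero (x : ℝ) (hx : 0 < x) : hhat 0 x = 1 := by
  rw [hhat, add_zero, zero_add, Real.Gamma_one, one_mul,
    div_self (Real.Gamma_pos_of_pos hx).ne']



/-- `P(N^q(t) = 0) = P(T > t)`:
`Σ_m (−λ)^m ĥ_{qm}(t+1) + λ·Σ_m (−λ)^m ĥ_{qm+q−1}(t+1) = F_{q,−λ}(t)`,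
where both series converge. -/
theorem prob_no_events (lam q : ℝ) (hlam0 : 0 < lam) (hlam1 : lam < 1)
    (hq0 : 0 < q) (hq1 : q ≤ 1) (t : ℕ) (ht : 1 ≤ t) :
    Summable (fun m : ℕ => (-lam) ^ m * hhat (q * m) ((t : ℝ) + 1)) ∧
    Summable (fun m : ℕ => (-lam) ^ m * hhat (q * m + q - 1) ((t : ℝ) + 1)) ∧
    (∑' m : ℕ, (-lam) ^ m * hhat (q * m) ((t : ℝ) + 1)) +
      lam * (∑' m : ℕ, (-lam) ^ m * hhat (q * m + q - 1) ((t : ℝ) + 1)) =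
      dML q (-lam) t := by
  set f := fun m : ℕ => (-lam) ^ m * hhat (q * m) ((t : ℝ) + 1) with hf
  set g := fun m : ℕ => (-lam) ^ m * hhat (q * m + q - 1) ((t : ℝ) + 1) with hg
  have hmq : ∀ m : ℕ, (0:ℝ) ≤ q * m := fun m => by positivity
  have S1 : Summable f :=
    summable_aux lam hlam0 hlam1 t (fun m => q * m)
      (fun m => lt_of_lt_of_le (by norm_num) (hmq m))
      (fun m => by
                   nlinarith [mul_nonneg (sub_nonneg.mpr hq1) (Nat.cast_nonneg (α := ℝ) m)])
  have S2 : Summable g :=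
    summable_aux lam hlam0 hlam1 t (fun m => q * m + q - 1)
      (fun m => by nlinarith [hmq m])
      (fun m => by
                   nlinarith [mul_nonneg (sub_nonneg.mpr hq1)
                     (by positivity : (0:ℝ) ≤ (m:ℝ) + 1)])
  refine ⟨S1, S2, ?_⟩
  -- the target series
  set h := fun m : ℕ => (-lam) ^ m * hhat (q * m) (t : ℝ) with hh
  have htcast : ((t - 1 : ℕ) : ℝ) + 1 = (t : ℝ) := by
    rw [Nat.cast_sub ht]; ring
  have Sh : Summable h := by
    have := summable_aux lam hlam0 hlam1 (t - 1) (fun m => q * m)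
      (fun m => lt_of_lt_of_le (by norm_num) (hmq m))
      (fun m => by
                   nlinarith [mul_nonneg (sub_nonneg.mpr hq1) (Nat.cast_nonneg (α := ℝ) m)])
    rw [htcast] at this
    exact this
  -- shifted second series
  set G := fun m : ℕ => if m = 0 then 0 else lam * g (m - 1) with hGdef
  have hGsucc : ∀ n : ℕ, G (n + 1) = lam * g n := fun n => by simp [hGdef]
  have SG : Summable G := by
    apply (summable_nat_add_iff 1).mp
    simp only [hGsucc]
    exact (S2.mul_left lam)
  have hGsum : ∑' m, G m = lam * ∑' m, g m := by
    rw [Summable.tsum_eq_zero_add SG]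
    have h0 : G 0 = 0 := by simp [hGdef]
    rw [h0, zero_add]
    simp only [hGsucc]
    rw [tsum_mul_left]
  -- termwise identity
  have key : ∀ m : ℕ, f m + G m = h m := by
    intro m
    cases m with
    | zero =>
      have htR : (0:ℝ) < t := by exact_mod_cast ht
      simp only [hf, hh, hGdef, if_pos rfl, pow_zero, one_mul, Nat.cast_zero, mul_zero,
        add_zero]
      rw [hhat_zero _ htR, hhat_zero _ (by linarith)]
    | succ m =>
      rw [hGsucc]
      simp only [hf, hg, hh]
      have hpos : (0:ℝ) < q * m + q := by positivity
      have hrec := hhat_rec (q * m + q) hpos t ht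
      have e1 : (q : ℝ) * ((m : ℕ) + 1 : ℕ) = q * m + q := by push_cast; ring
      rw [e1]
      have e2 : q * (m : ℝ) + q - 1 = (q * m + q) - 1 := by ring
      rw [e2]
      linear_combination ((-lam) ^ (m + 1)) * hrec
  calc (∑' m, f m) + lam * (∑' m, g m) = (∑' m, f m) + ∑' m, G m := by rw [hGsum]
    _ = ∑' m, (f m + G m) := (Summable.tsum_add S1 SG).symm
    _ = ∑' m, h m := tsum_congr key
    _ = dML q (-lam) t := by
        rw [dML, if_neg (by omega)]
        exact tsum_congr fun m => mul_comm _ _
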